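/- Conversely, if all errors are at least Δ on the incorrect predictions (|yₜ − ŷₜ| ≥ Δ whenever yₜ ≠ ŷₜ) and the accuracy is a, then RMSE ≥ Δ · sqrt(1 − a). -/
import Mathlib


open scoped Classical

/-- If every incorrect prediction has absolute error at least `Δ` and the
accuracy is `a`, then `RMSE ≥ Δ √(1 − a)`. -/
theorem rmse_ge_of_accuracy (n : ℕ) (hn : 1 ≤ n) (y yhat : Fin n → ℝ)
    (a Δ : ℝ) (hΔ : 0 < Δ)
    (ha : a = ((Finset.univ.filter fun t => y t = yhat t).card : ℝ) / n)
    (herr : ∀ t, y t ≠ yhat t → Δ ≤ |y t - yhat t|) :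
    Δ * Real.sqrt (1 - a) ≤ Real.sqrt ((n : ℝ)⁻¹ * ∑ t, (y t - yhat t) ^ 2) := by
  have hn0 : (0:ℝ) < n := by exact_mod_cast Nat.lt_of_lt_of_le Nat.zero_lt_one hn
  set S := Finset.univ.filter fun t => y t ≠ yhat t with hS
  have hcard : ((Finset.univ.filter fun t => y t = yhat t).card : ℝ) + S.card = n := by
    have := Finset.card_filter_add_card_filter_not
      (s := (Finset.univ : Finset (Fin n))) (p := fun t => y t = yhat t)
    rw [Finset.card_univ, Fintype.card_fin] at this
    simp only [hS, ne_eq]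
    exact_mod_cast this
  have h1a : 1 - a = (S.card : ℝ) / n := by
    rw [ha]
    field_simp
    linarith
  have hsum : Δ ^ 2 * S.card ≤ ∑ t, (y t - yhat t) ^ 2 := by
    calc Δ ^ 2 * S.card = ∑ t ∈ S, Δ ^ 2 := by
          rw [Finset.sum_const, nsmul_eq_mul, mul_comm]
      _ ≤ ∑ t ∈ S, (y t - yhat t) ^ 2 := by
          apply Finset.sum_le_sum
          intro t ht
          have h := herr t (Finset.mem_filter.mp ht).2
          calc Δ ^ 2 ≤ |y t - yhat t| ^ 2 := by
                exact pow_le_pow_left₀ hΔ.le h 2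
            _ = (y t - yhat t) ^ 2 := sq_abs _
      _ ≤ ∑ t, (y t - yhat t) ^ 2 := by
          apply Finset.sum_le_sum_of_subset_of_nonneg (Finset.filter_subset _ _)
          intro t _ _; positivity
  have key : Δ ^ 2 * (1 - a) ≤ (n : ℝ)⁻¹ * ∑ t, (y t - yhat t) ^ 2 := by
    rw [h1a]
    rw [div_eq_mul_inv, ← mul_assoc, inv_mul_eq_div, le_div_iff₀ hn0] at *
    calc Δ ^ 2 * (S.card : ℝ) * (n:ℝ)⁻¹ * n = Δ ^ 2 * S.card := by
          field_simp
      _ ≤ ∑ t, (y t - yhat t) ^ 2 := hsum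
  calc Δ * Real.sqrt (1 - a) = Real.sqrt (Δ ^ 2 * (1 - a)) := by
        rw [Real.sqrt_mul (by positivity), Real.sqrt_sq hΔ.le]
    _ ≤ _ := Real.sqrt_le_sqrt key
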